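/- For every integer n ≥ 1 and every real R ≥ 0, ∫_{0}^{R} ∫_{0}^{π} (1 − r² cos²θ)/(1 + r² cos²θ)² · r^{2n−1} sin^{2n−2}θ dθ dr = (2 R^{2n} / (2n−1)) · ∫_{0}^{1} (1 − R² t²) (1 − t²)^{(2n−1)/2} / (1 + R² t²)² dt. -/

import Mathlib

open MeasureTheory Set Filter Topology

lemma ftc_Ioo {A A' : ℝ → ℝ} {La Lb : ℝ}
    (hd : ∀ t ∈ Set.Ioo (0:ℝ) 1, HasDerivAt A (A' t) t)
    (hi : IntegrableOn A' (Set.Ioo 0 1))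
    (ha : Tendsto A (𝓝[>] (0:ℝ)) (𝓝 La)) (hb : Tendsto A (𝓝[<] (1:ℝ)) (𝓝 Lb)) :
    ∫ t in Set.Ioo (0:ℝ) 1, A' t = Lb - La := by
  set x : ℕ → ℝ := fun i => 1 / (i + 3) with hx
  set y : ℕ → ℝ := fun i => 1 - 1 / (i + 3) with hy
  have hx0 : ∀ i, 0 < x i := fun i => by positivity
  have hxlt : ∀ i, x i < 1/2 := by
    intro i
    have h3 : (0:ℝ) ≤ i := Nat.cast_nonneg i
    rw [hx, div_lt_div_iff₀ (by positivity) (by norm_num)]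
    linarith
  have hxy : ∀ i, x i < y i := fun i => by
    have := hxlt i; simp only [hy]; linarith
  have hy1 : ∀ i, y i < 1 := fun i => by
    have := hx0 i; simp only [hy, hx] at *; linarith
  have hxt : Tendsto x atTop (𝓝 0) := by
    have h : Tendsto (fun i : ℕ => (i:ℝ) + 3) atTop atTop :=
      tendsto_natCast_atTop_atTop.atTop_add tendsto_const_nhds
    exact h.inv_tendsto_atTop.congr (fun i => by simp [hx])
  have hyt : Tendsto y atTop (𝓝 1) := by
    have h : Tendsto y atTop (𝓝 (1 - 0)) := tendsto_const_nhds.sub hxt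
    simpa using h
  have cover : AECover (volume.restrict (Set.Ioo (0:ℝ) 1)) atTop fun i => Set.Ioo (x i) (y i) :=
    aecover_Ioo_of_Ioo hxt hyt
  have hlim := cover.integral_tendsto_of_countably_generated hi
  have hsub : ∀ i, Set.Ioo (x i) (y i) ⊆ Set.Ioo (0:ℝ) 1 :=
    fun i => Ioo_subset_Ioo (hx0 i).le (hy1 i).le
  have heq : ∀ i, (∫ t in Set.Ioo (x i) (y i), A' t ∂(volume.restrict (Set.Ioo (0:ℝ) 1)))
      = A (y i) - A (x i) := by
    intro i
    rw [Measure.restrict_restrict measurableSet_Ioo,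
      Set.inter_eq_self_of_subset_left (hsub i), ← integral_Ioc_eq_integral_Ioo,
      ← intervalIntegral.integral_of_le (hxy i).le]
    refine intervalIntegral.integral_eq_sub_of_hasDerivAt (fun t ht => ?_) ?_
    · rw [Set.uIcc_of_le (hxy i).le] at ht
      exact hd t ⟨lt_of_lt_of_le (hx0 i) ht.1, lt_of_le_of_lt ht.2 (hy1 i)⟩
    · rw [intervalIntegrable_iff_integrableOn_Ioo_of_le (hxy i).le]
      exact hi.mono_set (hsub i)
  rw [funext heq] at hlim
  have hA1 : Tendsto (fun i => A (y i)) atTop (𝓝 Lb) := by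
    refine hb.comp (tendsto_nhdsWithin_iff.2 ⟨hyt, ?_⟩)
    exact Eventually.of_forall fun i => hy1 i
  have hA0 : Tendsto (fun i => A (x i)) atTop (𝓝 La) := by
    refine ha.comp (tendsto_nhdsWithin_iff.2 ⟨hxt, ?_⟩)
    exact Eventually.of_forall fun i => hx0 i
  exact tendsto_nhds_unique hlim (hA1.sub hA0)

lemma cos_image : Real.cos '' Set.Ioo 0 (Real.pi/2) = Set.Ioo (0:ℝ) 1 := by
  ext y
  constructor
  · rintro ⟨θ, hθ, rfl⟩
    have hπ := Real.pi_pos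
    refine ⟨Real.cos_pos_of_mem_Ioo ⟨by linarith [hθ.1], hθ.2⟩, ?_⟩
    have := Real.strictAntiOn_cos (Set.left_mem_Icc.2 hπ.le)
      ⟨hθ.1.le, by linarith [hθ.2]⟩ hθ.1
    simpa using this
  · intro hy
    refine ⟨Real.arccos y, ⟨?_, ?_⟩, Real.cos_arccos (by linarith [hy.1]) hy.2.le⟩
    · exact Real.arccos_pos.2 hy.2
    · exact Real.arccos_lt_pi_div_two.2 hy.1

lemma stepA (m : ℕ) (r : ℝ) :
    (∫ θ in (0:ℝ)..Real.pi,
        (1 - r ^ 2 * Real.cos θ ^ 2) / (1 + r ^ 2 * Real.cos θ ^ 2) ^ 2 *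
          (r ^ (2*m+1) * Real.sin θ ^ (2*m)))
    = 2 * r ^ (2*m+1) *
      ∫ t in Set.Ioo (0:ℝ) 1,
        (1 - r ^ 2 * t ^ 2) / (1 + r ^ 2 * t ^ 2) ^ 2 *
          (1 - t ^ 2) ^ ((2*((m:ℝ)+1)-1) / 2 - 1) := by
  have hπ := Real.pi_pos
  set f : ℝ → ℝ := fun θ =>
    (1 - r ^ 2 * Real.cos θ ^ 2) / (1 + r ^ 2 * Real.cos θ ^ 2) ^ 2 *
      Real.sin θ ^ (2*m) with hf
  have hden : ∀ x : ℝ, (0:ℝ) < 1 + r ^ 2 * x ^ 2 := fun x => by positivity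
  have hfc : Continuous f := by
    apply Continuous.mul
    · apply Continuous.div (by fun_prop) (by fun_prop)
      intro θ; exact (pow_ne_zero 2 (hden (Real.cos θ)).ne')
    · fun_prop
  -- pull out the constant
  have h1 : (∫ θ in (0:ℝ)..Real.pi,
        (1 - r ^ 2 * Real.cos θ ^ 2) / (1 + r ^ 2 * Real.cos θ ^ 2) ^ 2 *
          (r ^ (2*m+1) * Real.sin θ ^ (2*m)))
      = r ^ (2*m+1) * ∫ θ in (0:ℝ)..Real.pi, f θ := by
    rw [← intervalIntegral.integral_const_mul]
    refine intervalIntegral.integral_congr fun θ _ => ?_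
    simp only [hf]; ring
  -- reflection: ∫_0^π = 2 ∫_0^{π/2}
  have h2 : (∫ θ in (0:ℝ)..Real.pi, f θ) = 2 * ∫ θ in (0:ℝ)..(Real.pi/2), f θ := by
    have hrefl : (∫ θ in (Real.pi/2)..Real.pi, f θ) = ∫ θ in (0:ℝ)..(Real.pi/2), f θ := by
      have := intervalIntegral.integral_comp_sub_left f Real.pi (a := 0) (b := Real.pi/2)
      rw [sub_zero, (by ring : Real.pi - Real.pi/2 = Real.pi/2)] at this
      rw [← this]
      refine intervalIntegral.integral_congr fun θ _ => ?_
      simp only [hf, Real.cos_pi_sub, Real.sin_pi_sub, neg_sq]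
    have hadd := intervalIntegral.integral_add_adjacent_intervals (μ := volume)
      (a := (0:ℝ)) (b := Real.pi/2) (c := Real.pi)
      (hfc.intervalIntegrable _ _) (hfc.intervalIntegrable _ _)
    rw [← hadd, hrefl]; ring
  -- substitution t = cos θ on Ioo (0, π/2)
  have h3 : (∫ θ in (0:ℝ)..(Real.pi/2), f θ) = ∫ θ in Set.Ioo (0:ℝ) (Real.pi/2), f θ := by
    rw [intervalIntegral.integral_of_le (by linarith), integral_Ioc_eq_integral_Ioo]
  set g : ℝ → ℝ := fun t =>
    (1 - r ^ 2 * t ^ 2) / (1 + r ^ 2 * t ^ 2) ^ 2 *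
      (1 - t ^ 2) ^ ((2*((m:ℝ)+1)-1) / 2 - 1) with hg
  have hmono : Set.Ioo (0:ℝ) (Real.pi/2) ⊆ Set.Icc 0 Real.pi :=
    fun θ hθ => ⟨hθ.1.le, by linarith [hθ.2]⟩
  have hsub : (∫ t in Set.Ioo (0:ℝ) 1, g t) = ∫ θ in Set.Ioo (0:ℝ) (Real.pi/2), f θ := by
    rw [← cos_image]
    rw [integral_image_eq_integral_abs_deriv_smul measurableSet_Ioo
      (fun θ _ => (Real.hasDerivAt_cos θ).hasDerivWithinAt)
      (Real.injOn_cos.mono hmono) g]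
    refine setIntegral_congr_fun measurableSet_Ioo fun θ hθ => ?_
    have hsin : 0 < Real.sin θ := Real.sin_pos_of_pos_of_lt_pi hθ.1 (by linarith [hθ.2])
    have habs : |(-Real.sin θ)| = Real.sin θ := by rw [abs_neg, abs_of_pos hsin]
    rw [smul_eq_mul, habs]
    simp only [hg, hf]
    have hkey : Real.sin θ * (1 - Real.cos θ ^ 2) ^ ((2*((m:ℝ)+1)-1) / 2 - 1)
        = Real.sin θ ^ (2*m) := by
      rw [← Real.sin_sq]
      rw [show (Real.sin θ ^ 2 : ℝ) = Real.sin θ ^ ((2:ℕ):ℝ) from (Real.rpow_natCast _ 2).symm]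
      rw [← Real.rpow_mul hsin.le]
      nth_rewrite 1 [show Real.sin θ = Real.sin θ ^ (1:ℝ) from (Real.rpow_one _).symm]
      rw [← Real.rpow_add hsin]
      rw [show (1 + (2:ℕ) * ((2*((m:ℝ)+1)-1) / 2 - 1) : ℝ) = ((2*m : ℕ):ℝ) by
        push_cast; ring]
      exact Real.rpow_natCast _ _
    rw [← hkey]; ring
  rw [h1, h2, h3, ← hsub]; ring

lemma int_c (d : ℝ) (hd : -1 < d) :
    IntegrableOn (fun t : ℝ => (1 - t^2) ^ d) (Set.Ioo 0 1) := by
  have h1 : IntegrableOn (fun t : ℝ => (1 - t) ^ d) (Set.Ioo 0 1) := by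
    have h0 : IntervalIntegrable (fun x : ℝ => x ^ d) volume 0 1 :=
      intervalIntegral.intervalIntegrable_rpow' hd
    have h2 := (h0.comp_sub_left 1).symm
    simp only [sub_zero, sub_self] at h2
    exact (intervalIntegrable_iff_integrableOn_Ioo_of_le zero_le_one).1 h2
  have hK : ∀ t ∈ Set.Ioo (0:ℝ) 1, ‖(1 - t^2) ^ d‖ ≤ max 1 ((2:ℝ)^d) * (1 - t) ^ d := by
    intro t ht
    have h1t : 0 < 1 - t := by linarith [ht.2]
    have h1t2 : 0 < 1 - t^2 := by nlinarith [ht.1, ht.2]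
    rw [Real.norm_eq_abs, abs_of_nonneg (Real.rpow_nonneg h1t2.le d)]
    have hfac : (1 - t^2 : ℝ) = (1 - t) * (1 + t) := by ring
    rw [hfac, Real.mul_rpow h1t.le (by linarith [ht.1])]
    rw [mul_comm (max 1 ((2:ℝ)^d)) _]
    refine mul_le_mul_of_nonneg_left ?_ (Real.rpow_nonneg h1t.le d)
    rcases le_or_gt 0 d with hd0 | hd0
    · exact le_max_of_le_right (Real.rpow_le_rpow (by linarith [ht.1]) (by linarith [ht.2]) hd0)
    · exact le_max_of_le_left
        (Real.rpow_le_one_of_one_le_of_nonpos (by linarith [ht.1]) hd0.le)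
  refine Integrable.mono' (h1.const_mul (max 1 ((2:ℝ)^d))) ?_ ?_
  · exact (Measurable.aestronglyMeasurable (by measurability)).restrict
  · exact (ae_restrict_mem measurableSet_Ioo).mono hK

lemma stepC (m : ℕ) (R : ℝ) (hR : 0 ≤ R) (t : ℝ) (ht : t ∈ Set.Ioo (0:ℝ) 1) :
    (∫ r in Set.Ioc (0:ℝ) R,
        2 * r ^ (2*m+1) * ((1 - r^2*t^2)/(1 + r^2*t^2)^2 * (1 - t^2) ^ ((2*((m:ℝ)+1)-1)/2 - 1)))
    = 2 * (1 - t^2) ^ ((2*((m:ℝ)+1)-1)/2 - 1) *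
        (∫ u in (0:ℝ)..(t*R), u ^ (2*m+1) * ((1 - u^2)/(1 + u^2)^2)) / t ^ (2*m+2) := by
  have ht0 : 0 < t := ht.1
  set φ : ℝ → ℝ := fun u => u ^ (2*m+1) * ((1 - u^2)/(1 + u^2)^2) with hφ
  have himg : (fun r => t * r) '' Set.Ioo 0 R = Set.Ioo 0 (t*R) := by
    ext y
    simp only [Set.mem_image, Set.mem_Ioo]
    constructor
    · rintro ⟨r, ⟨h1, h2⟩, rfl⟩
      exact ⟨by positivity, by nlinarith⟩
    · rintro ⟨h1, h2⟩
      refine ⟨y / t, ⟨by positivity, ?_⟩, by field_simp⟩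
      rw [div_lt_iff₀ ht0]; linarith
  have hsub := integral_image_eq_integral_abs_deriv_smul (s := Set.Ioo 0 R)
    measurableSet_Ioo
    (f := fun r => t * r) (f' := fun _ => t)
    (fun r _ => ((hasDerivAt_id r).const_mul t |>.congr_deriv (mul_one t)).hasDerivWithinAt)
    (fun a _ b _ hab => by
      have := mul_left_cancel₀ ht0.ne' hab
      exact this) φ
  rw [himg] at hsub
  rw [integral_Ioc_eq_integral_Ioo]
  have hptwise : ∀ r ∈ Set.Ioo (0:ℝ) R,
      2 * r ^ (2*m+1) * ((1 - r^2*t^2)/(1 + r^2*t^2)^2 * (1 - t^2) ^ ((2*((m:ℝ)+1)-1)/2 - 1))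
      = (2 * (1 - t^2) ^ ((2*((m:ℝ)+1)-1)/2 - 1) / t ^ (2*m+2)) * (|t| • φ (t * r)) := by
    intro r _
    rw [smul_eq_mul, abs_of_pos ht0, hφ]
    have hd1 : ((1:ℝ) + r^2*t^2) ≠ 0 := by positivity
    have hd2 : ((1:ℝ) + (t*r)^2) ≠ 0 := by positivity
    field_simp
    ring
  rw [setIntegral_congr_fun measurableSet_Ioo hptwise, integral_const_mul, ← hsub,
    ← integral_Ioc_eq_integral_Ioo, ← intervalIntegral.integral_of_le (by positivity)]
  ring

lemma cexp_gt (m : ℕ) : (-1:ℝ) < (2*((m:ℝ)+1)-1)/2 - 1 := by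
  have : (0:ℝ) ≤ m := Nat.cast_nonneg m
  linarith

lemma stepB (m : ℕ) (R : ℝ) (hR : 0 ≤ R) :
    (∫ r in Set.Ioc (0:ℝ) R, ∫ t in Set.Ioo (0:ℝ) 1,
        2 * r ^ (2*m+1) * ((1 - r^2*t^2)/(1 + r^2*t^2)^2 * (1 - t^2) ^ ((2*((m:ℝ)+1)-1)/2 - 1)))
    = ∫ t in Set.Ioo (0:ℝ) 1, ∫ r in Set.Ioc (0:ℝ) R,
        2 * r ^ (2*m+1) * ((1 - r^2*t^2)/(1 + r^2*t^2)^2 * (1 - t^2) ^ ((2*((m:ℝ)+1)-1)/2 - 1)) := by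
  set c : ℝ := (2*((m:ℝ)+1)-1)/2 - 1 with hc
  refine integral_integral_swap ?_
  have hGint : Integrable (fun p : ℝ × ℝ => (2 * R ^ (2*m+1)) * (1 - p.2^2) ^ c)
      ((volume.restrict (Set.Ioc (0:ℝ) R)).prod (volume.restrict (Set.Ioo (0:ℝ) 1))) := by
    exact Integrable.mul_prod (L := ℝ) (f := fun _ : ℝ => 2 * R ^ (2*m+1))
      (g := fun t : ℝ => (1 - t^2) ^ c)
      (integrableOn_const measure_Ioc_lt_top.ne) (int_c c (cexp_gt m))
  refine hGint.mono' ?_ ?_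
  · rw [Function.uncurry_def]
    refine Measurable.aestronglyMeasurable ?_
    have h0 : Measurable fun x : ℝ => (1 - x^2) ^ c := by measurability
    have h1 : Measurable fun p : ℝ × ℝ => (1 - p.2^2) ^ c := h0.comp measurable_snd
    have hc1 : Continuous fun p : ℝ × ℝ => 2 * p.1 ^ (2*m+1) := by fun_prop
    have hc2 : Continuous fun p : ℝ × ℝ =>
        (1 - p.1^2*p.2^2)/(1 + p.1^2*p.2^2)^2 := by
      apply Continuous.div (by fun_prop) (by fun_prop)
      intro p
      positivity
    exact (hc1.measurable).mul ((hc2.measurable).mul h1)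
  · rw [Measure.prod_restrict]
    filter_upwards [ae_restrict_mem (measurableSet_Ioc.prod measurableSet_Ioo)] with p hp
    obtain ⟨⟨hr0, hrR⟩, ht0, ht1⟩ := hp
    rw [Function.uncurry_def]
    have hcnn : (0:ℝ) ≤ (1 - p.2^2) ^ c := Real.rpow_nonneg (by nlinarith) c
    have hden : (0:ℝ) < 1 + p.1^2*p.2^2 := by positivity
    have hfrac : |(1 - p.1^2*p.2^2)/(1 + p.1^2*p.2^2)^2| ≤ 1 := by
      rw [abs_div, div_le_one (by positivity)]
      rw [abs_of_pos (by positivity : (0:ℝ) < (1 + p.1^2*p.2^2)^2)]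
      have : |1 - p.1^2*p.2^2| ≤ 1 + p.1^2*p.2^2 := by
        rw [abs_le]; constructor <;> nlinarith
      have hx : (0:ℝ) ≤ p.1^2*p.2^2 := by positivity
      nlinarith [this, hx]
    have hpow : p.1 ^ (2*m+1) ≤ R ^ (2*m+1) := pow_le_pow_left₀ hr0.le hrR _
    have hpnn : (0:ℝ) ≤ p.1 ^ (2*m+1) := pow_nonneg hr0.le _
    rw [Real.norm_eq_abs]
    calc |2 * p.1 ^ (2*m+1) * ((1 - p.1^2*p.2^2)/(1 + p.1^2*p.2^2)^2 * (1 - p.2^2) ^ c)|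
        = 2 * p.1 ^ (2*m+1) * (|(1 - p.1^2*p.2^2)/(1 + p.1^2*p.2^2)^2| * (1 - p.2^2) ^ c) := by
          rw [abs_mul, abs_mul, abs_mul, abs_two, abs_of_nonneg hpnn, abs_of_nonneg hcnn]
      _ ≤ 2 * R ^ (2*m+1) * (1 * (1 - p.2^2) ^ c) := by
          apply mul_le_mul (by linarith) (mul_le_mul_of_nonneg_right hfrac hcnn)
            (by positivity) (by positivity)
      _ = 2 * R ^ (2*m+1) * (1 - p.2^2) ^ c := by ring

set_option maxHeartbeats 1600000 in
lemma stepD (m : ℕ) (R : ℝ) (hR : 0 ≤ R) :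
    (∫ t in Set.Ioo (0:ℝ) 1,
      2 * (1 - t^2) ^ ((2*((m:ℝ)+1)-1)/2 - 1) *
        (∫ u in (0:ℝ)..(t*R), u ^ (2*m+1) * ((1 - u^2)/(1 + u^2)^2)) / t ^ (2*m+2))
    = (2 * R^(2*m+2) / (2*((m:ℝ)+1)-1)) *
        ∫ s in (0:ℝ)..1, (1 - R^2*s^2) * (1 - s^2) ^ ((2*((m:ℝ)+1)-1)/2) / (1 + R^2*s^2)^2 := by
  have hm0 : (0:ℝ) ≤ m := Nat.cast_nonneg m
  set a : ℝ := (2*((m:ℝ)+1)-1)/2 with ha_def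
  have ha : 0 < a := by rw [ha_def]; linarith
  have hK0 : (2*((m:ℝ)+1)-1) ≠ 0 := by intro h; rw [ha_def] at *; linarith
  set φ : ℝ → ℝ := fun u => u ^ (2*m+1) * ((1 - u^2)/(1 + u^2)^2) with hφ
  set ψ : ℝ → ℝ := fun s => (1 - R^2*s^2) * (1 - s^2) ^ a / (1 + R^2*s^2)^2 with hψ
  have hφc : Continuous φ := by
    apply Continuous.mul (by fun_prop)
    apply Continuous.div (by fun_prop) (by fun_prop)
    intro u; positivity
  have hψc : Continuous ψ := by
    refine Continuous.div (Continuous.mul (by fun_prop)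
      (Continuous.rpow_const (by fun_prop) (fun s => Or.inr ha.le))) (by fun_prop)
      (fun s => by positivity)
  have hΦd : ∀ x : ℝ, HasDerivAt (fun y => ∫ u in (0:ℝ)..y, φ u) (φ x) x := fun x =>
    intervalIntegral.integral_hasDerivAt_right (hφc.intervalIntegrable _ _)
      (hφc.stronglyMeasurableAtFilter _ _) hφc.continuousAt
  have hΦc : Continuous (fun y => ∫ u in (0:ℝ)..y, φ u) :=
    continuous_iff_continuousAt.2 fun x => (hΦd x).continuousAt
  have hSd : ∀ x : ℝ, HasDerivAt (fun y => ∫ s in (0:ℝ)..y, ψ s) (ψ x) x := fun x =>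
    intervalIntegral.integral_hasDerivAt_right (hψc.intervalIntegrable _ _)
      (hψc.stronglyMeasurableAtFilter _ _) hψc.continuousAt
  -- bound on Φ
  have hΦb : ∀ x : ℝ, 0 ≤ x → |∫ u in (0:ℝ)..x, φ u| ≤ x ^ (2*m+2) := by
    intro x hx
    have h1 : |∫ u in (0:ℝ)..x, φ u| ≤ ∫ u in (0:ℝ)..x, |φ u| :=
      intervalIntegral.abs_integral_le_integral_abs hx
    have h2 : (∫ u in (0:ℝ)..x, |φ u|) ≤ ∫ u in (0:ℝ)..x, u ^ (2*m+1) := by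
      refine intervalIntegral.integral_mono_on hx (hφc.abs.intervalIntegrable _ _)
        ((by fun_prop : Continuous fun u : ℝ => u ^ (2*m+1)).intervalIntegrable _ _) ?_
      intro u hu
      have hu0 : 0 ≤ u := hu.1
      rw [hφ, abs_mul, abs_of_nonneg (pow_nonneg hu0 _)]
      have : |(1 - u^2)/(1 + u^2)^2| ≤ 1 := by
        rw [abs_div, div_le_one (by positivity), abs_of_pos (by positivity : (0:ℝ) < (1+u^2)^2)]
        have h3 : |1 - u^2| ≤ 1 + u^2 := by rw [abs_le]; constructor <;> nlinarith
        nlinarith [sq_nonneg (u^2)]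
      nlinarith [pow_nonneg hu0 (2*m+1), abs_nonneg ((1 - u^2)/(1 + u^2)^2)]
    have h3 : (∫ u in (0:ℝ)..x, u ^ (2*m+1)) = x^(2*m+2) / ((2*m+1:ℕ)+1) := by
      rw [integral_pow]; norm_num
    have h4 : x^(2*m+2) / ((2*m+1:ℕ)+1) ≤ x^(2*m+2) := by
      apply div_le_self (by positivity)
      push_cast; linarith
    linarith
  -- the antiderivative
  set A : ℝ → ℝ := fun t => (2/(2*((m:ℝ)+1)-1)) *
    (R^(2*m+2) * (∫ s in (0:ℝ)..t, ψ s) -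
      (1 - t^2) ^ a / t ^ (2*m+1) * (∫ u in (0:ℝ)..(t*R), φ u)) with hA
  -- derivative on Ioo 0 1
  have hd : ∀ t ∈ Set.Ioo (0:ℝ) 1, HasDerivAt A
      (2 * (1 - t^2) ^ (a - 1) * (∫ u in (0:ℝ)..(t*R), φ u) / t ^ (2*m+2)) t := by
    intro t ht
    have ht0 : 0 < t := ht.1
    have hx : 0 < 1 - t^2 := by nlinarith [ht.1, ht.2]
    have hb : HasDerivAt (fun y : ℝ => 1 - y^2) (0 - 2*t^1) t :=
      (hasDerivAt_const t 1).sub (hasDerivAt_pow 2 t)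
    have h1 := hb.rpow_const (p := a) (Or.inl hx.ne')
    have h2 : HasDerivAt (fun y : ℝ => y ^ (2*m+1)) ((2*m+1 : ℕ) * t ^ (2*m)) t := by
      simpa using hasDerivAt_pow (2*m+1) t
    have h3 : HasDerivAt (fun y : ℝ => ∫ u in (0:ℝ)..(y*R), φ u) (φ (t*R) * (1 * R)) t :=
      by have h3' := (hΦd (t*R)).comp t ((hasDerivAt_id' t).mul_const R); exact h3'
    have h4 := (h1.div h2 (pow_ne_zero _ ht0.ne')).mul h3
    have h5 := (((hSd t).const_mul (R^(2*m+2))).sub h4).const_mul (2/(2*((m:ℝ)+1)-1))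
    refine h5.congr_deriv ?_
    have hsplit : (1 - t^2) ^ a = (1 - t^2) ^ (a - 1) * (1 - t^2) := by
      rw [← Real.rpow_add_one hx.ne' (a-1)]; ring_nf
    simp only [hψ, hφ, Pi.div_apply]
    rw [hsplit]
    have hd1 : ((1:ℝ) + R^2*t^2) ≠ 0 := by positivity
    have hd2 : ((1:ℝ) + (t*R)^2) ≠ 0 := by positivity
    push_cast
    field_simp
    ring
  -- integrability of the derivative
  have hint : IntegrableOn (fun t =>
      2 * (1 - t^2) ^ (a - 1) * (∫ u in (0:ℝ)..(t*R), φ u) / t ^ (2*m+2)) (Set.Ioo 0 1) := by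
    refine Integrable.mono' ((int_c (a-1) (by rw [ha_def]; exact cexp_gt m)).const_mul
      (2 * R^(2*m+2))) ?_ ?_
    · refine Measurable.aestronglyMeasurable ?_
      have hX : Measurable fun t : ℝ => (1 - t^2) ^ (a-1) := by measurability
      have hP : Measurable fun t : ℝ => ∫ u in (0:ℝ)..(t*R), φ u :=
        hΦc.measurable.comp (measurable_id.mul_const R)
      exact (((measurable_const.mul hX).mul hP).div ((measurable_id.pow_const (2*m+2))))
    · filter_upwards [ae_restrict_mem measurableSet_Ioo] with t ht
      have ht0 : 0 < t := ht.1
      have hx : 0 < 1 - t^2 := by nlinarith [ht.1, ht.2]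
      have hXnn : (0:ℝ) ≤ (1-t^2) ^ (a-1) := Real.rpow_nonneg hx.le _
      have hΦle : |∫ u in (0:ℝ)..(t*R), φ u| ≤ t^(2*m+2) * R^(2*m+2) := by
        have := hΦb (t*R) (by positivity)
        rwa [mul_pow] at this
      rw [Real.norm_eq_abs, abs_div, abs_mul, abs_mul, abs_two,
        abs_of_nonneg hXnn, abs_of_pos (by positivity : (0:ℝ) < t ^ (2*m+2)),
        div_le_iff₀ (by positivity : (0:ℝ) < t ^ (2*m+2))]
      calc 2 * (1-t^2)^(a-1) * |∫ u in (0:ℝ)..(t*R), φ u|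
          ≤ 2 * (1-t^2)^(a-1) * (t^(2*m+2) * R^(2*m+2)) :=
            mul_le_mul_of_nonneg_left hΦle (by positivity)
        _ = 2 * R^(2*m+2) * (1-t^2)^(a-1) * t^(2*m+2) := by ring
  -- limit at 0
  have ha0 : Tendsto A (𝓝[>] (0:ℝ)) (𝓝 0) := by
    have hT1 : Tendsto (fun t => (2/(2*((m:ℝ)+1)-1)) * (R^(2*m+2) * ∫ s in (0:ℝ)..t, ψ s))
        (𝓝[>] (0:ℝ)) (𝓝 0) := by
      have hc0 := (hSd 0).continuousAt
      have hw : Tendsto (fun y => ∫ s in (0:ℝ)..y, ψ s) (𝓝[>] (0:ℝ))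
          (𝓝 (∫ s in (0:ℝ)..(0:ℝ), ψ s)) := hc0.tendsto.mono_left nhdsWithin_le_nhds
      have h := hw.const_mul (R^(2*m+2))
      have h2 := h.const_mul (2/(2*((m:ℝ)+1)-1))
      simpa using h2
    have hT2 : Tendsto (fun t => (2/(2*((m:ℝ)+1)-1)) *
        ((1 - t^2) ^ a / t ^ (2*m+1) * (∫ u in (0:ℝ)..(t*R), φ u)))
        (𝓝[>] (0:ℝ)) (𝓝 0) := by
      have hB : Tendsto (fun t => (1 - t^2) ^ a / t ^ (2*m+1) * (∫ u in (0:ℝ)..(t*R), φ u))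
          (𝓝[>] (0:ℝ)) (𝓝 0) := ?_
      · simpa using hB.const_mul (2/(2*((m:ℝ)+1)-1))
      have hgt : Tendsto (fun t : ℝ => R^(2*m+2) * t) (𝓝[>] (0:ℝ)) (𝓝 0) := by
        have h0 : Tendsto (fun t : ℝ => R^(2*m+2) * t) (𝓝 0) (𝓝 (R^(2*m+2) * 0)) :=
          (continuous_const.mul continuous_id).tendsto 0
        simpa using h0.mono_left nhdsWithin_le_nhds
      refine squeeze_zero_norm' ?_ hgt
      · filter_upwards [Ioo_mem_nhdsGT (zero_lt_one : (0:ℝ) < 1)] with t ht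
        have ht0 : 0 < t := ht.1
        have hx : 0 < 1 - t^2 := by nlinarith [ht.1, ht.2]
        have h1 : (1 - t^2) ^ a ≤ 1 := Real.rpow_le_one hx.le (by nlinarith [ht.1]) ha.le
        have hΦle : |∫ u in (0:ℝ)..(t*R), φ u| ≤ t^(2*m+2) * R^(2*m+2) := by
          have := hΦb (t*R) (by positivity)
          rwa [mul_pow] at this
        have hpow : t^(2*m+2) = t^(2*m+1) * t := by
          rw [← pow_succ]
        rw [Real.norm_eq_abs, abs_mul, abs_div, abs_of_nonneg (Real.rpow_nonneg hx.le a),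
          abs_of_pos (by positivity : (0:ℝ) < t^(2*m+1))]
        calc (1-t^2)^a / t^(2*m+1) * |∫ u in (0:ℝ)..(t*R), φ u|
            ≤ 1 / t^(2*m+1) * (t^(2*m+2) * R^(2*m+2)) := by
              refine mul_le_mul ?_ hΦle (abs_nonneg _) (by positivity)
              exact div_le_div_of_nonneg_right h1 (by positivity) |>.trans_eq rfl
          _ = R^(2*m+2) * t := by
              rw [hpow]; field_simp
    have := hT1.sub hT2
    simp only [sub_zero] at this
    exact this.congr fun t => by simp only [hA]; ring
  -- limit at 1
  have hb1 : Tendsto A (𝓝[<] (1:ℝ))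
      (𝓝 ((2/(2*((m:ℝ)+1)-1)) * (R^(2*m+2) * ∫ s in (0:ℝ)..1, ψ s))) := by
    have hAc : ContinuousAt A 1 := by
      rw [hA]
      apply ContinuousAt.mul continuousAt_const
      apply ContinuousAt.sub
      · exact ((hSd 1).continuousAt).const_mul _
      · apply ContinuousAt.mul
        · apply ContinuousAt.div
          · apply ContinuousAt.rpow_const (by fun_prop) (Or.inr ha.le)
          · fun_prop
          · norm_num
        · exact hΦc.continuousAt.comp (by fun_prop)
    have h : Tendsto A (𝓝[<] (1:ℝ)) (𝓝 (A 1)) := hAc.tendsto.mono_left nhdsWithin_le_nhds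
    have hA1 : A 1 = (2/(2*((m:ℝ)+1)-1)) * (R^(2*m+2) * ∫ s in (0:ℝ)..1, ψ s) := by
      rw [hA]
      norm_num [Real.zero_rpow ha.ne']
    rwa [hA1] at h
  have key := ftc_Ioo hd hint ha0 hb1
  rw [key]
  ring


theorem stmt4 (n : ℕ) (hn : 1 ≤ n) (R : ℝ) (hR : 0 ≤ R) :
    (∫ r in (0 : ℝ)..R, ∫ θ in (0 : ℝ)..Real.pi,
        (1 - r ^ 2 * Real.cos θ ^ 2) / (1 + r ^ 2 * Real.cos θ ^ 2) ^ 2 *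
          (r ^ (2 * n - 1) * Real.sin θ ^ (2 * n - 2))) =
      (2 * R ^ (2 * n) / (2 * (n : ℝ) - 1)) *
        ∫ t in (0 : ℝ)..1,
          (1 - R ^ 2 * t ^ 2) * (1 - t ^ 2) ^ ((2 * (n : ℝ) - 1) / 2) /
            (1 + R ^ 2 * t ^ 2) ^ 2 := by
  obtain ⟨m, rfl⟩ : ∃ m, n = m + 1 := ⟨n - 1, by omega⟩
  simp only [show 2*(m+1) = 2*m+2 from by omega, show 2*m+2-1 = 2*m+1 from by omega,
    show 2*m+2-2 = 2*m from by omega]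
  push_cast
  rw [intervalIntegral.integral_congr (fun r _ => stepA m r),
    intervalIntegral.integral_of_le hR,
    setIntegral_congr_fun measurableSet_Ioc
      (fun r _ => (integral_const_mul (2 * r ^ (2*m+1)) _).symm),
    stepB m R hR,
    setIntegral_congr_fun measurableSet_Ioo (fun t ht => stepC m R hR t ht)]
  exact stepD m R hR
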